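/- Let α and β be ω-complete partial orders each with a least element ⊥, and let f : α →𝒄 β and g : β →𝒄 α be ω-continuous maps. Then ωSup ⟨n ↦ (f ∘ g)^[n] ⊥⟩ = f (ωSup ⟨n ↦ (g ∘ f)^[n] ⊥⟩), i.e. the Kleene least fixed point of the composite f ∘ g : β →𝒄 β equals the image under f of the Kleene least fixed point of g ∘ f : α →𝒄 α. -/
import Mathlib


open OmegaCompletePartialOrder

/-- The Kleene chain `⊥ ≤ f ⊥ ≤ f (f ⊥) ≤ ⋯` of iterates of `f` starting at `⊥`. -/
def kleeneChain {α : Type*} [OmegaCompletePartialOrder α] [OrderBot α]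
    (f : α →𝒄 α) : Chain α where
  toFun n := f^[n] ⊥
  monotone' := monotone_nat_of_le_succ fun n => by
    rw [Function.iterate_succ_apply]
    exact (f.toOrderHom.monotone.iterate n) bot_le

/-- Dinaturality for the Kleene fixed point: the least fixed point of `f ∘ g` is the image
under `f` of the least fixed point of `g ∘ f`. -/
theorem kleeneFix_dinatural {α β : Type*}
    [OmegaCompletePartialOrder α] [OrderBot α]
    [OmegaCompletePartialOrder β] [OrderBot β]
    (f : α →𝒄 β) (g : β →𝒄 α) :
    ωSup (kleeneChain (f.comp g)) = f (ωSup (kleeneChain (g.comp f))) := by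
  have hsemi : Function.Semiconj ⇑f (⇑g ∘ ⇑f) (⇑f ∘ ⇑g) := fun x => rfl
  have key : ∀ n, f ((⇑g ∘ ⇑f)^[n] ⊥) = (⇑f ∘ ⇑g)^[n] (f ⊥) := fun n =>
    (hsemi.iterate_right n) ⊥
  rw [f.continuous]
  apply le_antisymm <;> apply ωSup_le <;> intro n
  · -- (f∘g)^[n] ⊥ ≤ f ((g∘f)^[n] ⊥)
    calc (kleeneChain (f.comp g)) n = (⇑f ∘ ⇑g)^[n] ⊥ := rfl
      _ ≤ (⇑f ∘ ⇑g)^[n] (f ⊥) := ((f.comp g).toOrderHom.monotone.iterate n) bot_le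
      _ = ((kleeneChain (g.comp f)).map f.toOrderHom) n := (key n).symm
      _ ≤ _ := le_ωSup _ n
  · -- f ((g∘f)^[n] ⊥) ≤ (f∘g)^[n+1] ⊥
    calc ((kleeneChain (g.comp f)).map f.toOrderHom) n = (⇑f ∘ ⇑g)^[n] (f ⊥) := key n
      _ ≤ (⇑f ∘ ⇑g)^[n] ((⇑f ∘ ⇑g) ⊥) :=
        ((f.comp g).toOrderHom.monotone.iterate n) (f.monotone bot_le)
      _ = (kleeneChain (f.comp g)) (n + 1) := (Function.iterate_succ_apply _ n ⊥).symm
      _ ≤ _ := le_ωSup _ (n + 1)
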